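/- arXiv:1912.10947 — 3 statements merged into one kernel-verified Lean document; each statement's English description precedes it below -/
import Mathlib

section
/- Let (T(t))_{t≥0} be a C₀-semigroup on a complex Banach space X with infinitesimal generator A. For every x ∈ X and every t ≥ 0, one has e^{tσ_A(x)} ⊆ σ_{T(t)}(x); equivalently, if λ ∈ ℂ and e^{λt} belongs to the local resolvent set ρ_{T(t)}(x) of the bounded operator T(t) at x, then λ belongs to the local resolvent set ρ_A(x) of A at x. -/
open Filter Topology Metric

/-- A strongly continuous one-parameter semigroup of bounded linear operators:
`T 0 = I`, `T (s+t) = T s ∘ T t` for `s,t ≥ 0`, and `t ↦ T t x` is continuous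
on `[0,∞)` for every `x`. -/
structure IsC0Semigroup {X : Type*} [NormedAddCommGroup X] [NormedSpace ℂ X]
    (T : ℝ → X →L[ℂ] X) : Prop where
  map_zero : T 0 = 1
  map_add : ∀ s t : ℝ, 0 ≤ s → 0 ≤ t → T (s + t) = T s ∘L T t
  strong_continuity : ∀ x : X, ContinuousOn (fun t : ℝ => T t x) (Set.Ici 0)

/-- `A`, with domain `D`, is the infinitesimal generator of the semigroup `T`:
`D = {x : lim_{t→0⁺} (T t x - x)/t exists}` and `A x` is that limit on `D`. -/
structure IsGenerator {X : Type*} [NormedAddCommGroup X] [NormedSpace ℂ X]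
    (T : ℝ → X →L[ℂ] X) (D : Set X) (A : X → X) : Prop where
  mem_domain_iff : ∀ x : X,
    x ∈ D ↔ ∃ y : X, Tendsto (fun t : ℝ => t⁻¹ • (T t x - x)) (𝓝[>] 0) (𝓝 y)
  tendsto_of_mem : ∀ x ∈ D,
    Tendsto (fun t : ℝ => t⁻¹ • (T t x - x)) (𝓝[>] 0) (𝓝 (A x))

/-- The Cesàro average `C(t)x = t⁻¹ ∫₀ᵗ T(s)x ds`. -/
noncomputable def cesaro {X : Type*} [NormedAddCommGroup X] [NormedSpace ℂ X]
    (T : ℝ → X →L[ℂ] X) (t : ℝ) (x : X) : X :=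
  t⁻¹ • ∫ s in (0:ℝ)..t, T s x

/-- The local resolvent set of the (possibly unbounded) operator `A` with domain `D`
at `x`: the union of all open `U ⊆ ℂ` admitting an analytic `f : U → D` with
`(A - μ)f(μ) = x` on `U`. -/
def localResolventSet {X : Type*} [NormedAddCommGroup X] [NormedSpace ℂ X]
    (D : Set X) (A : X → X) (x : X) : Set ℂ :=
  {μ | ∃ U : Set ℂ, IsOpen U ∧ μ ∈ U ∧ ∃ f : ℂ → X, AnalyticOnNhd ℂ f U ∧
      ∀ z ∈ U, f z ∈ D ∧ A (f z) - z • f z = x}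

/-- The local spectrum `σ_A(x) = ℂ \ ρ_A(x)`. -/
def localSpectrum {X : Type*} [NormedAddCommGroup X] [NormedSpace ℂ X]
    (D : Set X) (A : X → X) (x : X) : Set ℂ :=
  (localResolventSet D A x)ᶜ

open MeasureTheory in
lemma exp_taylor_bound {a b : ℂ} (h : ‖a - b‖ ≤ 1) :
    ‖Complex.exp a - Complex.exp b - (a - b) * Complex.exp b‖
      ≤ ‖a - b‖ ^ 2 * Real.exp ‖b‖ := by
  have hid : Complex.exp a - Complex.exp b - (a - b) * Complex.exp b
      = Complex.exp b * (Complex.exp (a - b) - 1 - (a - b)) := by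
    have hab : Complex.exp a = Complex.exp b * Complex.exp (a - b) := by
      rw [← Complex.exp_add]; ring_nf
    rw [hab]; ring
  rw [hid, norm_mul]
  have h1 : ‖Complex.exp (a - b) - 1 - (a - b)‖ ≤ ‖a - b‖ ^ 2 := by
    have hb := Complex.exp_bound (x := a - b) (by simpa using h) (n := 2) (by norm_num)
    have hs : (∑ m ∈ Finset.range 2, (a - b) ^ m / m.factorial) = 1 + (a - b) := by
      simp [Finset.sum_range_succ]
    rw [hs] at hb
    have e1 : Complex.exp (a - b) - 1 - (a - b) = Complex.exp (a - b) - (1 + (a - b)) := by ring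
    rw [e1]
    calc ‖Complex.exp (a - b) - (1 + (a - b))‖
        ≤ ‖a - b‖ ^ 2 * ((3 : ℝ) * ((2 : ℝ) * 2)⁻¹) := by
          simpa using hb
      _ ≤ ‖a - b‖ ^ 2 := by
          nlinarith [norm_nonneg (a - b), sq_nonneg ‖a - b‖]
  have h2 : ‖Complex.exp b‖ ≤ Real.exp ‖b‖ := by
    rw [Complex.norm_exp]
    exact Real.exp_le_exp.2 ((le_abs_self _).trans (Complex.abs_re_le_norm b))
  calc ‖Complex.exp b‖ * ‖Complex.exp (a - b) - 1 - (a - b)‖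
      ≤ Real.exp ‖b‖ * ‖a - b‖ ^ 2 :=
        mul_le_mul h2 h1 (norm_nonneg _) (Real.exp_nonneg _)
    _ = ‖a - b‖ ^ 2 * Real.exp ‖b‖ := mul_comm _ _


section Helpers
open MeasureTheory

variable {X : Type*} [NormedAddCommGroup X] [NormedSpace ℂ X] [CompleteSpace X]
variable {T : ℝ → X →L[ℂ] X}

lemma c0_norm_bound (hT : IsC0Semigroup T) (b : ℝ) :
    ∃ M : ℝ, 0 ≤ M ∧ ∀ s ∈ Set.Icc (0:ℝ) b, ‖T s‖ ≤ M := by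
  have h : ∀ x : X, ∃ C, ∀ i : Set.Icc (0:ℝ) b, ‖T i x‖ ≤ C := by
    intro x
    rcases le_or_gt 0 b with hb | hb
    · have hc : ContinuousOn (fun s => T s x) (Set.Icc 0 b) :=
        (hT.strong_continuity x).mono Set.Icc_subset_Ici_self
      obtain ⟨C, hC⟩ := isCompact_Icc.exists_bound_of_continuousOn hc
      exact ⟨C, fun i => hC i i.2⟩
    · exact ⟨0, fun i => absurd (i.2.1.trans i.2.2) (not_le.2 hb)⟩
  obtain ⟨M, hM⟩ := banach_steinhaus (g := fun i : Set.Icc (0:ℝ) b => T i) h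
  exact ⟨max M 0, le_max_right _ _, fun s hs => le_trans (hM ⟨s, hs⟩) (le_max_left _ _)⟩

lemma c0_intInt (hT : IsC0Semigroup T) (y : X) {w : ℝ → ℂ} (hw : Continuous w)
    {a b : ℝ} (ha : 0 ≤ a) (hab : a ≤ b) :
    IntervalIntegrable (fun s => w s • T s y) volume a b := by
  apply ContinuousOn.intervalIntegrable
  rw [Set.uIcc_of_le hab]
  exact hw.continuousOn.smul
    ((hT.strong_continuity y).mono (fun u hu => le_trans ha hu.1))

lemma cont_wt (t : ℝ) (l : ℂ) : Continuous fun s : ℝ => Complex.exp (l * (↑t - ↑s)) :=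
  (continuous_const.mul (continuous_const.sub Complex.continuous_ofReal)).cexp

lemma cont_wt' (t : ℝ) (l : ℂ) :
    Continuous fun s : ℝ => ((↑t - ↑s) * Complex.exp (l * (↑t - ↑s)) : ℂ) :=
  (continuous_const.sub Complex.continuous_ofReal).mul (cont_wt t l)

end Helpers

noncomputable def sInt {X : Type*} [NormedAddCommGroup X] [NormedSpace ℂ X]
    (T : ℝ → X →L[ℂ] X) (t : ℝ) (l : ℂ) (y : X) : X :=
  ∫ s in (0:ℝ)..t, Complex.exp (l * (↑t - ↑s)) • T s y

noncomputable def sInt' {X : Type*} [NormedAddCommGroup X] [NormedSpace ℂ X]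
    (T : ℝ → X →L[ℂ] X) (t : ℝ) (l : ℂ) (y : X) : X :=
  ∫ s in (0:ℝ)..t, ((↑t - ↑s) * Complex.exp (l * (↑t - ↑s))) • T s y

section Helpers2
open MeasureTheory

variable {X : Type*} [NormedAddCommGroup X] [NormedSpace ℂ X] [CompleteSpace X]
variable {T : ℝ → X →L[ℂ] X}

lemma sInt_norm_le (hT : IsC0Semigroup T) {t M : ℝ} (ht : 0 ≤ t) (hM0 : 0 ≤ M)
    (hM : ∀ s ∈ Set.Icc (0:ℝ) t, ‖T s‖ ≤ M) (l : ℂ) (y : X) :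
    ‖sInt T t l y‖ ≤ t * (Real.exp (‖l‖ * t) * (M * ‖y‖)) := by
  have hb : ∀ s ∈ Set.uIoc (0:ℝ) t,
      ‖Complex.exp (l * (↑t - ↑s)) • T s y‖ ≤ Real.exp (‖l‖ * t) * (M * ‖y‖) := by
    intro s hs
    rw [Set.uIoc_of_le ht] at hs
    rw [norm_smul]
    have h1 : ‖Complex.exp (l * (↑t - ↑s))‖ ≤ Real.exp (‖l‖ * t) := by
      rw [Complex.norm_exp]
      apply Real.exp_le_exp.2
      have e1 : (l * (↑t - ↑s)).re ≤ ‖l * ((↑t : ℂ) - ↑s)‖ :=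
        (le_abs_self _).trans (Complex.abs_re_le_norm _)
      have e2 : ‖l * ((↑t : ℂ) - ↑s)‖ = ‖l‖ * ‖((↑t : ℂ) - ↑s)‖ := norm_mul _ _
      have e3 : ‖((↑t : ℂ) - ↑s)‖ ≤ t := by
        rw [← Complex.ofReal_sub, Complex.norm_real, Real.norm_eq_abs,
          abs_of_nonneg (by linarith [hs.2] : (0:ℝ) ≤ t - s)]
        linarith [hs.1]
      have e4 : ‖l‖ * ‖((↑t : ℂ) - ↑s)‖ ≤ ‖l‖ * t :=
        mul_le_mul_of_nonneg_left e3 (norm_nonneg l)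
      linarith
    have h2 : ‖T s y‖ ≤ M * ‖y‖ :=
      le_trans ((T s).le_opNorm y)
        (mul_le_mul_of_nonneg_right (hM s ⟨hs.1.le, hs.2⟩) (norm_nonneg y))
    exact mul_le_mul h1 h2 (norm_nonneg _) (Real.exp_nonneg _)
  have hi := intervalIntegral.norm_integral_le_of_norm_le_const hb
  rw [abs_of_nonneg (by linarith : (0:ℝ) ≤ t - 0)] at hi
  have : Real.exp (‖l‖ * t) * (M * ‖y‖) * (t - 0)
      = t * (Real.exp (‖l‖ * t) * (M * ‖y‖)) := by ring
  rw [this] at hi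
  exact hi

lemma sInt_sub (hT : IsC0Semigroup T) {t : ℝ} (ht : 0 ≤ t) (l : ℂ) (u v : X) :
    sInt T t l (u - v) = sInt T t l u - sInt T t l v := by
  unfold sInt
  rw [← intervalIntegral.integral_sub (c0_intInt hT u (cont_wt t l) le_rfl ht)
      (c0_intInt hT v (cont_wt t l) le_rfl ht)]
  congr 1
  funext s
  rw [map_sub, smul_sub]

lemma sInt_smul_arg (hT : IsC0Semigroup T) (t : ℝ) (l c : ℂ) (v : X) :
    sInt T t l (c • v) = c • sInt T t l v := by
  unfold sInt
  rw [← intervalIntegral.integral_smul]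
  congr 1
  funext s
  rw [(T s).map_smul, smul_comm]

lemma avg_tendsto {φ : ℝ → X} {c : ℝ} (hφ : ContinuousOn φ (Set.Icc c (c + 1))) :
    Tendsto (fun h : ℝ => h⁻¹ • ∫ u in c..(c + h), φ u) (𝓝[>] (0:ℝ)) (𝓝 (φ c)) := by
  rw [Metric.tendsto_nhdsWithin_nhds]
  intro ε hε
  have hc : ContinuousWithinAt φ (Set.Icc c (c + 1)) c :=
    hφ c ⟨le_rfl, by linarith⟩
  rw [Metric.continuousWithinAt_iff] at hc
  obtain ⟨δ, hδ, hδ'⟩ := hc (ε / 2) (by positivity)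
  refine ⟨min δ 1, by positivity, ?_⟩
  intro h hh hdist
  have h0 : (0:ℝ) < h := hh
  have hda : h < min δ 1 := by
    simpa [Real.dist_eq, abs_of_pos h0] using hdist
  have hh1 : h ≤ 1 := le_of_lt (lt_of_lt_of_le hda (min_le_right _ _))
  have hhδ : h < δ := lt_of_lt_of_le hda (min_le_left _ _)
  have hint : IntervalIntegrable φ volume c (c + h) := by
    apply ContinuousOn.intervalIntegrable
    rw [Set.uIcc_of_le (by linarith)]
    exact hφ.mono (Set.Icc_subset_Icc le_rfl (by linarith))
  have hkey : h⁻¹ • (∫ u in c..(c + h), φ u) - φ c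
      = h⁻¹ • ∫ u in c..(c + h), (φ u - φ c) := by
    rw [intervalIntegral.integral_sub hint intervalIntegrable_const,
      intervalIntegral.integral_const, smul_sub, add_sub_cancel_left,
      smul_smul, inv_mul_cancel₀ h0.ne', one_smul]
  rw [dist_eq_norm, hkey, norm_smul]
  have hb : ∀ u ∈ Set.uIoc c (c + h), ‖φ u - φ c‖ ≤ ε / 2 := by
    intro u hu
    rw [Set.uIoc_of_le (by linarith)] at hu
    have hu1 : u ∈ Set.Icc c (c + 1) := ⟨hu.1.le, hu.2.trans (by linarith)⟩
    have hu2 : dist u c < δ := by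
      rw [Real.dist_eq, abs_of_nonneg (by linarith [hu.1.le] : (0:ℝ) ≤ u - c)]
      linarith [hu.2]
    exact le_of_lt (by simpa [dist_eq_norm] using hδ' hu1 hu2)
  have hi := intervalIntegral.norm_integral_le_of_norm_le_const hb
  rw [abs_of_nonneg (by linarith : (0:ℝ) ≤ c + h - c)] at hi
  calc ‖h⁻¹‖ * ‖∫ u in c..(c + h), (φ u - φ c)‖
      ≤ h⁻¹ * (ε / 2 * (c + h - c)) := by
        apply mul_le_mul _ hi (norm_nonneg _) (by positivity)
        rw [Real.norm_eq_abs, abs_of_pos (by positivity)]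
    _ = ε / 2 := by field_simp; ring
    _ < ε := by linarith

end Helpers2

section Helpers3
open MeasureTheory

variable {X : Type*} [NormedAddCommGroup X] [NormedSpace ℂ X] [CompleteSpace X]
variable {T : ℝ → X →L[ℂ] X}

lemma sInt_hasDerivAt (hT : IsC0Semigroup T) {t M : ℝ} (ht : 0 ≤ t) (hM0 : 0 ≤ M)
    (hM : ∀ s ∈ Set.Icc (0:ℝ) t, ‖T s‖ ≤ M) (y : X) (l₀ : ℂ) :
    HasDerivAt (fun l => sInt T t l y) (sInt' T t l₀ y) l₀ := by
  rw [hasDerivAt_iff_isLittleO]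
  set C₀ : ℝ := t ^ 2 * Real.exp (‖l₀‖ * t) * (M * ‖y‖) with hC₀
  have hC₀0 : 0 ≤ C₀ := by positivity
  have key : ∀ l : ℂ, ‖l - l₀‖ ≤ (t + 1)⁻¹ →
      ‖sInt T t l y - sInt T t l₀ y - (l - l₀) • sInt' T t l₀ y‖
        ≤ ‖l - l₀‖ ^ 2 * C₀ * t := by
    intro l hl
    have h1 := c0_intInt hT y (cont_wt t l) le_rfl ht
    have h2 := c0_intInt hT y (cont_wt t l₀) le_rfl ht
    have h3 := c0_intInt hT y (w := fun s => (l - l₀) * ((↑t - ↑s) * Complex.exp (l₀ * (↑t - ↑s)))) (continuous_const.mul (cont_wt' t l₀)) le_rfl ht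
    have e0 : (l - l₀) • sInt' T t l₀ y
        = ∫ s in (0:ℝ)..t, ((l - l₀) * ((↑t - ↑s) * Complex.exp (l₀ * (↑t - ↑s)))) • T s y := by
      rw [sInt', ← intervalIntegral.integral_smul]
      congr 1; funext s; rw [smul_smul]
    have e1 : sInt T t l y - sInt T t l₀ y - (l - l₀) • sInt' T t l₀ y
        = ∫ s in (0:ℝ)..t,
            ((Complex.exp (l * (↑t - ↑s)) - Complex.exp (l₀ * (↑t - ↑s))
              - (l - l₀) * ((↑t - ↑s) * Complex.exp (l₀ * (↑t - ↑s)))) • T s y) := by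
      rw [e0, sInt, sInt, ← intervalIntegral.integral_sub h1 h2,
        ← intervalIntegral.integral_sub (h1.sub h2) h3]
      congr 1; funext s
      rw [sub_smul, sub_smul]
    rw [e1]
    have hb : ∀ s ∈ Set.uIoc (0:ℝ) t,
        ‖(Complex.exp (l * (↑t - ↑s)) - Complex.exp (l₀ * (↑t - ↑s))
            - (l - l₀) * ((↑t - ↑s) * Complex.exp (l₀ * (↑t - ↑s)))) • T s y‖
          ≤ ‖l - l₀‖ ^ 2 * C₀ := by
      intro s hs
      rw [Set.uIoc_of_le ht] at hs
      have hts : (0:ℝ) ≤ t - s := by linarith [hs.2]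
      have hts' : t - s ≤ t := by linarith [hs.1]
      have hnorm_ts : ‖((↑t : ℂ) - ↑s)‖ = t - s := by
        rw [← Complex.ofReal_sub, Complex.norm_real, Real.norm_eq_abs, abs_of_nonneg hts]
      set a : ℂ := l * (↑t - ↑s)
      set b : ℂ := l₀ * (↑t - ↑s)
      have hab : a - b = (l - l₀) * (↑t - ↑s) := by rw [sub_mul]
      have hab_norm : ‖a - b‖ = ‖l - l₀‖ * (t - s) := by
        rw [hab, norm_mul, hnorm_ts]
      have hab1 : ‖a - b‖ ≤ 1 := by
        rw [hab_norm]
        calc ‖l - l₀‖ * (t - s) ≤ (t + 1)⁻¹ * (t + 1) :=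
              mul_le_mul hl (by linarith) hts (by positivity)
          _ = 1 := inv_mul_cancel₀ (by positivity)
      have hid2 : (l - l₀) * ((↑t - ↑s) * Complex.exp (l₀ * (↑t - ↑s)))
          = (a - b) * Complex.exp b := by rw [hab]; ring
      rw [norm_smul, hid2]
      have htb := exp_taylor_bound hab1
      have hbn : ‖b‖ ≤ ‖l₀‖ * t := by
        rw [norm_mul, hnorm_ts]
        exact mul_le_mul_of_nonneg_left hts' (norm_nonneg l₀)
      have h5 : ‖Complex.exp a - Complex.exp b - (a - b) * Complex.exp b‖
          ≤ (‖l - l₀‖ * t) ^ 2 * Real.exp (‖l₀‖ * t) := by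
        refine le_trans htb ?_
        apply mul_le_mul _ (Real.exp_le_exp.2 hbn) (Real.exp_nonneg _) (by positivity)
        rw [hab_norm]
        have : ‖l - l₀‖ * (t - s) ≤ ‖l - l₀‖ * t :=
          mul_le_mul_of_nonneg_left hts' (norm_nonneg _)
        exact pow_le_pow_left₀ (by positivity) this 2
      have h6 : ‖T s y‖ ≤ M * ‖y‖ :=
        le_trans ((T s).le_opNorm y)
          (mul_le_mul_of_nonneg_right (hM s ⟨hs.1.le, hs.2⟩) (norm_nonneg y))
      calc ‖Complex.exp a - Complex.exp b - (a - b) * Complex.exp b‖ * ‖T s y‖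
          ≤ (‖l - l₀‖ * t) ^ 2 * Real.exp (‖l₀‖ * t) * (M * ‖y‖) :=
            mul_le_mul h5 h6 (norm_nonneg _) (by positivity)
        _ = ‖l - l₀‖ ^ 2 * C₀ := by rw [hC₀]; ring
    have hi := intervalIntegral.norm_integral_le_of_norm_le_const hb
    rw [abs_of_nonneg (by linarith : (0:ℝ) ≤ t - 0)] at hi
    calc ‖∫ s in (0:ℝ)..t, ((Complex.exp (l * (↑t - ↑s)) - Complex.exp (l₀ * (↑t - ↑s))
              - (l - l₀) * ((↑t - ↑s) * Complex.exp (l₀ * (↑t - ↑s)))) • T s y)‖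
        ≤ ‖l - l₀‖ ^ 2 * C₀ * (t - 0) := hi
      _ = ‖l - l₀‖ ^ 2 * C₀ * t := by ring
  rw [Asymptotics.isLittleO_iff]
  intro c hc
  have hball : Metric.closedBall l₀ (min (t + 1)⁻¹ (c / (C₀ * t + 1))) ∈ 𝓝 l₀ :=
    Metric.closedBall_mem_nhds l₀ (by positivity)
  filter_upwards [hball] with l hl
  rw [Metric.mem_closedBall, dist_eq_norm] at hl
  have hl1 : ‖l - l₀‖ ≤ (t + 1)⁻¹ := le_trans hl (min_le_left _ _)
  have hl2 : ‖l - l₀‖ ≤ c / (C₀ * t + 1) := le_trans hl (min_le_right _ _)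
  refine le_trans (key l hl1) ?_
  have e : ‖l - l₀‖ ^ 2 * C₀ * t = ‖l - l₀‖ * (C₀ * t) * ‖l - l₀‖ := by ring
  rw [e]
  apply mul_le_mul_of_nonneg_right _ (norm_nonneg _)
  calc ‖l - l₀‖ * (C₀ * t) ≤ (c / (C₀ * t + 1)) * (C₀ * t + 1) := by
        apply mul_le_mul hl2 (by linarith) (by positivity) (by positivity)
    _ = c := by field_simp
  
end Helpers3


section Helpers4
open MeasureTheory

variable {X : Type*} [NormedAddCommGroup X] [NormedSpace ℂ X] [CompleteSpace X]
variable {T : ℝ → X →L[ℂ] X}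

lemma exp_slope_tendsto (l : ℂ) :
    Tendsto (fun h : ℝ => h⁻¹ • (Complex.exp (l * ↑h) - 1)) (𝓝[>] (0:ℝ)) (𝓝 l) := by
  have h1 : HasDerivAt (fun z : ℂ => Complex.exp (l * z)) l 0 := by
    have := (Complex.hasDerivAt_exp (l * 0)).comp 0 ((hasDerivAt_id (0:ℂ)).const_mul l)
    simpa [Function.comp_def] using this
  have hd : HasDerivAt (fun h : ℝ => Complex.exp (l * ↑h)) l 0 := by
    have := h1.comp_ofReal (z := 0)
    simpa using this
  have hs := hasDerivAt_iff_tendsto_slope.1 hd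
  have hmono : 𝓝[>] (0:ℝ) ≤ 𝓝[≠] (0:ℝ) :=
    nhdsWithin_mono 0 (fun u hu => ne_of_gt hu)
  refine (hs.mono_left hmono).congr' ?_
  filter_upwards [self_mem_nhdsWithin] with h hh
  rw [slope_def_module]
  simp

lemma sInt_mem {D : Set X} {A : X → X} (hT : IsC0Semigroup T) (hA : IsGenerator T D A)
    {t : ℝ} (ht : 0 < t) (l : ℂ) (y : X) :
    sInt T t l y ∈ D ∧
      A (sInt T t l y) = T t y - Complex.exp (l * ↑t) • y + l • sInt T t l y := by
  set φ : ℝ → X := fun u => Complex.exp (l * (↑t - ↑u)) • T u y with hφ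
  have hφc : ContinuousOn φ (Set.Ici 0) :=
    (cont_wt t l).continuousOn.smul (hT.strong_continuity y)
  have hint : ∀ {a b : ℝ}, 0 ≤ a → a ≤ b → IntervalIntegrable φ volume a b := by
    intro a b ha hab
    exact c0_intInt hT y (cont_wt t l) ha hab
  set B := sInt T t l y with hB
  have hkey : ∀ h : ℝ, 0 < h → T h B - B = (Complex.exp (l * ↑h) - 1) • B
      + Complex.exp (l * ↑h) •
        ((∫ u in t..(t + h), φ u) - ∫ u in (0:ℝ)..h, φ u) := by
    intro h hh
    have e1 : T h B = ∫ s in (0:ℝ)..t, T h (φ s) :=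
      ((T h).intervalIntegral_comp_comm (hint le_rfl ht.le)).symm
    have e2 : ∀ s ∈ Set.uIcc (0:ℝ) t,
        T h (φ s) = Complex.exp (l * ↑h) • φ (s + h) := by
      intro s hs
      rw [Set.uIcc_of_le ht.le] at hs
      have hTs : T h ((T s) y) = T (s + h) y := by
        rw [add_comm s h, hT.map_add h s hh.le hs.1]; rfl
      simp only [hφ, ContinuousLinearMap.map_smul, hTs, smul_smul]
      congr 1
      rw [← Complex.exp_add]
      congr 1
      push_cast
      ring
    have e3 : (∫ s in (0:ℝ)..t, T h (φ s))
        = ∫ s in (0:ℝ)..t, Complex.exp (l * ↑h) • φ (s + h) :=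
      intervalIntegral.integral_congr e2
    have e4 : (∫ s in (0:ℝ)..t, Complex.exp (l * ↑h) • φ (s + h))
        = Complex.exp (l * ↑h) • ∫ s in (0:ℝ)..t, φ (s + h) :=
      intervalIntegral.integral_smul _ _
    have e5 : (∫ s in (0:ℝ)..t, φ (s + h)) = ∫ u in (0 + h)..(t + h), φ u :=
      intervalIntegral.integral_comp_add_right φ h
    have i1 : (∫ u in (0:ℝ)..h, φ u) + (∫ u in h..(t + h), φ u)
        = ∫ u in (0:ℝ)..(t + h), φ u :=
      intervalIntegral.integral_add_adjacent_intervals (hint le_rfl hh.le)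
        (hint hh.le (by linarith))
    have i2 : (∫ u in (0:ℝ)..t, φ u) + (∫ u in t..(t + h), φ u)
        = ∫ u in (0:ℝ)..(t + h), φ u :=
      intervalIntegral.integral_add_adjacent_intervals (hint le_rfl ht.le)
        (hint ht.le (by linarith))
    have e6 : (∫ u in h..(t + h), φ u)
        = (∫ u in (0:ℝ)..t, φ u) + ((∫ u in t..(t + h), φ u) - ∫ u in (0:ℝ)..h, φ u) := by
      have := i1.trans i2.symm
      -- ∫_0^h + ∫_h^{t+h} = ∫_0^t + ∫_t^{t+h}
      have h7 : (∫ u in h..(t + h), φ u)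
          = (∫ u in (0:ℝ)..t, φ u) + (∫ u in t..(t + h), φ u) - ∫ u in (0:ℝ)..h, φ u := by
        rw [← this]; abel
      rw [h7]; abel
    have hBint : B = ∫ u in (0:ℝ)..t, φ u := rfl
    rw [e1, e3, e4, e5, zero_add, e6, hBint]
    rw [smul_add, sub_smul, one_smul]
    abel
  have l1 : Tendsto (fun h : ℝ => h⁻¹ • ∫ u in t..(t + h), φ u) (𝓝[>] (0:ℝ))
      (𝓝 (T t y)) := by
    have := avg_tendsto (c := t) (hφc.mono (fun u hu => le_trans ht.le hu.1))
    have hφt : φ t = T t y := by simp [hφ]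
    rwa [hφt] at this
  have l2 : Tendsto (fun h : ℝ => h⁻¹ • ∫ u in (0:ℝ)..h, φ u) (𝓝[>] (0:ℝ))
      (𝓝 (Complex.exp (l * ↑t) • y)) := by
    have := avg_tendsto (c := 0) (hφc.mono (fun u hu => hu.1))
    have hφ0 : φ 0 = Complex.exp (l * ↑t) • y := by
      simp [hφ, hT.map_zero]
    simp only [zero_add] at this
    rwa [hφ0] at this
  have l3 := exp_slope_tendsto l
  have l4 : Tendsto (fun h : ℝ => Complex.exp (l * ↑h)) (𝓝[>] (0:ℝ)) (𝓝 1) := by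
    have hcont : Continuous fun h : ℝ => Complex.exp (l * ↑h) :=
      (continuous_const.mul Complex.continuous_ofReal).cexp
    have := (hcont.tendsto 0).mono_left (nhdsWithin_le_nhds (s := Set.Ioi (0:ℝ)))
    simpa using this
  have main : Tendsto (fun h : ℝ => h⁻¹ • (T h B - B)) (𝓝[>] (0:ℝ))
      (𝓝 (T t y - Complex.exp (l * ↑t) • y + l • B)) := by
    have heq : ∀ᶠ h : ℝ in 𝓝[>] (0:ℝ), (h⁻¹ • (Complex.exp (l * ↑h) - 1)) • B
          + Complex.exp (l * ↑h) •
            ((h⁻¹ • ∫ u in t..(t + h), φ u) - h⁻¹ • ∫ u in (0:ℝ)..h, φ u)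
        = h⁻¹ • (T h B - B) := by
      filter_upwards [self_mem_nhdsWithin] with h hh
      rw [hkey h hh, smul_add]
      congr 1
      · exact smul_assoc _ _ _
      · rw [← smul_sub]
        exact smul_comm _ _ _
    have hlim : Tendsto (fun h : ℝ => (h⁻¹ • (Complex.exp (l * ↑h) - 1)) • B
          + Complex.exp (l * ↑h) •
            ((h⁻¹ • ∫ u in t..(t + h), φ u) - h⁻¹ • ∫ u in (0:ℝ)..h, φ u))
        (𝓝[>] (0:ℝ)) (𝓝 (l • B + (1:ℂ) • (T t y - Complex.exp (l * ↑t) • y))) :=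
      (l3.smul tendsto_const_nhds).add (l4.smul (l1.sub l2))
    have := hlim.congr' heq
    rw [one_smul, add_comm] at this
    exact this
  have hmem : B ∈ D := (hA.mem_domain_iff B).2 ⟨_, main⟩
  exact ⟨hmem, tendsto_nhds_unique (hA.tendsto_of_mem B hmem) main⟩

end Helpers4

section Helpers5
open MeasureTheory

variable {X : Type*} [NormedAddCommGroup X] [NormedSpace ℂ X] [CompleteSpace X]
variable {T : ℝ → X →L[ℂ] X}

lemma sInt_comp_differentiableAt (hT : IsC0Semigroup T) {t M : ℝ} (ht : 0 ≤ t)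
    (hM0 : 0 ≤ M) (hM : ∀ s ∈ Set.Icc (0:ℝ) t, ‖T s‖ ≤ M) {y : ℂ → X} {l₀ : ℂ}
    (hy : DifferentiableAt ℂ y l₀) :
    DifferentiableAt ℂ (fun l => sInt T t l (y l)) l₀ := by
  have hY : HasDerivAt y (deriv y l₀) l₀ := hy.hasDerivAt
  set y₀ := y l₀ with hy₀
  set y' := deriv y l₀ with hy'
  have hS := sInt_hasDerivAt hT ht hM0 hM y₀ l₀
  have hS' := sInt_hasDerivAt hT ht hM0 hM y' l₀
  refine HasDerivAt.differentiableAt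
    (f' := sInt' T t l₀ y₀ + sInt T t l₀ y') ?_
  rw [hasDerivAt_iff_isLittleO]
  have hE1 : (fun l => sInt T t l y₀ - sInt T t l₀ y₀ - (l - l₀) • sInt' T t l₀ y₀)
      =o[𝓝 l₀] (fun l => l - l₀) := hasDerivAt_iff_isLittleO.1 hS
  have hr : (fun l => y l - y₀ - (l - l₀) • y') =o[𝓝 l₀] (fun l => l - l₀) :=
    hasDerivAt_iff_isLittleO.1 hY
  have hE2 : (fun l => sInt T t l (y l - y₀ - (l - l₀) • y'))
      =o[𝓝 l₀] (fun l => l - l₀) := by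
    refine Asymptotics.IsBigO.trans_isLittleO ?_ hr
    rw [Asymptotics.isBigO_iff]
    refine ⟨t * (Real.exp ((‖l₀‖ + 1) * t) * M), ?_⟩
    filter_upwards [Metric.ball_mem_nhds l₀ one_pos] with l hl
    rw [Metric.mem_ball, dist_eq_norm] at hl
    have hln : ‖l‖ ≤ ‖l₀‖ + 1 := by
      calc ‖l‖ = ‖l₀ + (l - l₀)‖ := by ring_nf
        _ ≤ ‖l₀‖ + ‖l - l₀‖ := norm_add_le _ _
        _ ≤ ‖l₀‖ + 1 := by linarith
    have hb := sInt_norm_le hT ht hM0 hM l (y l - y₀ - (l - l₀) • y')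
    refine le_trans hb ?_
    have hexp : Real.exp (‖l‖ * t) ≤ Real.exp ((‖l₀‖ + 1) * t) :=
      Real.exp_le_exp.2 (mul_le_mul_of_nonneg_right hln ht)
    calc t * (Real.exp (‖l‖ * t) * (M * ‖y l - y₀ - (l - l₀) • y'‖))
        ≤ t * (Real.exp ((‖l₀‖ + 1) * t) * (M * ‖y l - y₀ - (l - l₀) • y'‖)) := by
          apply mul_le_mul_of_nonneg_left _ ht
          apply mul_le_mul_of_nonneg_right hexp (by positivity)
      _ = t * (Real.exp ((‖l₀‖ + 1) * t) * M) * ‖y l - y₀ - (l - l₀) • y'‖ := by ring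
  have hE3 : (fun l => (l - l₀) • (sInt T t l y' - sInt T t l₀ y'))
      =o[𝓝 l₀] (fun l => l - l₀) := by
    rw [Asymptotics.isLittleO_iff]
    intro c hc
    have hc0 : Tendsto (fun l => sInt T t l y' - sInt T t l₀ y') (𝓝 l₀) (𝓝 0) := by
      have := hS'.continuousAt.tendsto.sub (tendsto_const_nhds (x := sInt T t l₀ y'))
      simpa using this
    have hev : ∀ᶠ l in 𝓝 l₀, ‖sInt T t l y' - sInt T t l₀ y'‖ < c := by
      have := hc0 (Metric.ball_mem_nhds 0 hc)
      filter_upwards [this] with l hl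
      simpa [dist_eq_norm] using hl
    filter_upwards [hev] with l hl
    rw [norm_smul]
    calc ‖l - l₀‖ * ‖sInt T t l y' - sInt T t l₀ y'‖ ≤ ‖l - l₀‖ * c :=
          mul_le_mul_of_nonneg_left hl.le (norm_nonneg _)
      _ = c * ‖l - l₀‖ := mul_comm _ _
  have hid : ∀ l, sInt T t l (y l) - sInt T t l₀ y₀
      - (l - l₀) • (sInt' T t l₀ y₀ + sInt T t l₀ y')
      = (sInt T t l y₀ - sInt T t l₀ y₀ - (l - l₀) • sInt' T t l₀ y₀)
        + sInt T t l (y l - y₀ - (l - l₀) • y')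
        + (l - l₀) • (sInt T t l y' - sInt T t l₀ y') := by
    intro l
    rw [sInt_sub hT ht l _ _, sInt_sub hT ht l _ _, sInt_smul_arg hT t l _ _]
    rw [smul_add, smul_sub]
    abel
  have hsum := (hE1.add hE2).add hE3
  refine hsum.congr' ?_ EventuallyEq.rfl
  filter_upwards with l
  exact (hid l).symm

end Helpers5


section Main

variable {X : Type*} [NormedAddCommGroup X] [NormedSpace ℂ X] [CompleteSpace X]

theorem exp_localSpectrum_subset'
    (T : ℝ → X →L[ℂ] X) (D : Set X) (A : X → X)
    (hT : IsC0Semigroup T) (hA : IsGenerator T D A) :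
    ∀ x : X, ∀ t : ℝ, 0 ≤ t → ∀ μ : ℂ,
      Complex.exp (μ * t) ∈ localResolventSet (Set.univ : Set X) (fun v => T t v) x →
      μ ∈ localResolventSet D A x := by
  intro x t ht μ hμ
  obtain ⟨U, hUopen, hmemU, f, hf, hfe⟩ := hμ
  rcases ht.eq_or_lt with h0 | htpos
  · -- t = 0
    subst h0
    have hx : x = 0 := by
      have h2 := (hfe _ hmemU).2
      simp only [hT.map_zero, Complex.ofReal_zero, mul_zero, Complex.exp_zero,
        ContinuousLinearMap.one_apply, one_smul, sub_self] at h2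
      exact h2.symm
    have hconst : (fun h : ℝ => h⁻¹ • (T h (0:X) - 0)) = fun _ => (0:X) := by
      funext h; simp
    have h0D : (0:X) ∈ D := by
      refine (hA.mem_domain_iff 0).2 ⟨0, ?_⟩
      rw [hconst]; exact tendsto_const_nhds
    have hA0 : A 0 = 0 := by
      refine tendsto_nhds_unique (hA.tendsto_of_mem 0 h0D) ?_
      rw [hconst]; exact tendsto_const_nhds
    exact ⟨Set.univ, isOpen_univ, Set.mem_univ μ, fun _ => (0:X),
      analyticOnNhd_const, fun z _ =>
        ⟨h0D, by rw [hA0, smul_zero, sub_zero, hx]⟩⟩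
  · -- t > 0
    obtain ⟨M, hM0, hM⟩ := c0_norm_bound hT t
    set V : Set ℂ := (fun l : ℂ => Complex.exp (l * ↑t)) ⁻¹' U with hV
    have hVopen : IsOpen V :=
      hUopen.preimage ((continuous_id.mul continuous_const).cexp)
    have hmemV : μ ∈ V := hmemU
    refine ⟨V, hVopen, hmemV, fun l => sInt T t l (f (Complex.exp (l * ↑t))), ?_, ?_⟩
    · apply DifferentiableOn.analyticOnNhd _ hVopen
      intro l₀ hl₀
      have h1 : DifferentiableAt ℂ f (Complex.exp (l₀ * ↑t)) :=
        (hf _ hl₀).differentiableAt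
      have h2 : DifferentiableAt ℂ (fun l : ℂ => Complex.exp (l * ↑t)) l₀ :=
        (differentiableAt_id.mul_const _).cexp
      have hy : DifferentiableAt ℂ (fun l => f (Complex.exp (l * ↑t))) l₀ := by
        have := h1.comp l₀ h2
        simpa [Function.comp_def] using this
      exact (sInt_comp_differentiableAt hT htpos.le hM0 hM hy).differentiableWithinAt
    · intro z hz
      have heq := (hfe _ hz).2
      obtain ⟨hmem, hAeq⟩ := sInt_mem hT hA htpos z (f (Complex.exp (z * ↑t)))
      refine ⟨hmem, ?_⟩
      rw [hAeq, add_sub_cancel_right]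
      exact heq

end Main

/-- `e^{t σ_A(x)} ⊆ σ_{T(t)}(x)` for all `t ≥ 0`: if `e^{μt}` belongs to the local
resolvent set of the bounded operator `T(t)` at `x`, then `μ` belongs to the local
resolvent set of `A` at `x`. -/
theorem exp_localSpectrum_subset
    {X : Type*} [NormedAddCommGroup X] [NormedSpace ℂ X] [CompleteSpace X]
    (T : ℝ → X →L[ℂ] X) (D : Set X) (A : X → X)
    (hT : IsC0Semigroup T) (hA : IsGenerator T D A) :
    ∀ x : X, ∀ t : ℝ, 0 ≤ t → ∀ μ : ℂ,
      Complex.exp (μ * t) ∈ localResolventSet (Set.univ : Set X) (fun v => T t v) x →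
      μ ∈ localResolventSet D A x :=
  exp_localSpectrum_subset' T D A hT hA
end

section
/- Let (T(t))_{t≥0} be a C₀-semigroup on a complex Banach space X with infinitesimal generator A such that ‖T(t)v‖/t → 0 as t → ∞ for every v ∈ X. If x belongs to the analytic core K(A), then T(t) is local mean ergodic at x, with lim_{t→∞} C(t)x = 0. -/
open Filter Topology Metric

/-- If `‖T(t)v‖/t → 0` for every `v` and `x` belongs to the analytic core `K(A)`
(there are `δ > 0` and a sequence `(xₙ) ⊆ D(A)` with `x₀ = x`, `A xₙ = xₙ₋₁` and
`‖xₙ‖ ≤ δⁿ ‖x‖`), then `T(t)` is local mean ergodic at `x` with limit `0`. -/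
theorem localMeanErgodic_of_mem_analyticCore
    {X : Type*} [NormedAddCommGroup X] [NormedSpace ℂ X] [CompleteSpace X]
    (T : ℝ → X →L[ℂ] X) (D : Set X) (A : X → X)
    (hT : IsC0Semigroup T) (hA : IsGenerator T D A)
    (hgrowth : ∀ v : X, Tendsto (fun t : ℝ => ‖T t v‖ / t) atTop (𝓝 0))
    (x : X)
    (hx : ∃ δ : ℝ, 0 < δ ∧ ∃ u : ℕ → X, u 0 = x ∧ (∀ n : ℕ, u n ∈ D) ∧
      (∀ n : ℕ, A (u (n + 1)) = u n) ∧ ∀ n : ℕ, ‖u n‖ ≤ δ ^ n * ‖x‖) :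
    Tendsto (fun t : ℝ => cesaro T t x) atTop (𝓝 0) := by
  obtain ⟨δ, hδ, u, hu0, huD, huA, hub⟩ := hx
  set y := u 1 with hy
  have hyD : y ∈ D := huD 1
  have hAy : A y = x := by rw [hy, huA 0, hu0]
  have hgen : Tendsto (fun h : ℝ => h⁻¹ • (T h y - y)) (𝓝[>] 0) (𝓝 x) := by
    have := hA.tendsto_of_mem y hyD
    rwa [hAy] at this
  -- key integral identity
  have key : ∀ t : ℝ, 0 < t → (∫ s in (0:ℝ)..t, T s x) = T t y - y := by
    intro t ht
    have hconty : ContinuousOn (fun s : ℝ => T s y) (Set.Icc 0 t) :=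
      (hT.strong_continuity y).mono Set.Icc_subset_Ici_self
    have hcontx : ContinuousOn (fun s : ℝ => T s x) (Set.Icc 0 t) :=
      (hT.strong_continuity x).mono Set.Icc_subset_Ici_self
    have hderiv : ∀ s ∈ Set.Ioo (0:ℝ) t,
        HasDerivWithinAt (fun r : ℝ => T r y) (T s x) (Set.Ioi s) s := by
      intro s hs
      rw [hasDerivWithinAt_iff_tendsto_slope]
      have hIoi : Set.Ioi s \ {s} = Set.Ioi s :=
        Set.diff_singleton_eq_self (by simp)
      rw [hIoi]
      have hmap : Tendsto (fun r : ℝ => r - s) (𝓝[>] s) (𝓝[>] 0) := by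
        apply tendsto_nhdsWithin_of_tendsto_nhds_of_eventually_within
        · have : Tendsto (fun r : ℝ => r - s) (𝓝 s) (𝓝 (s - s)) :=
            (continuous_id.sub continuous_const).tendsto s
          simpa using this.mono_left nhdsWithin_le_nhds
        · filter_upwards [self_mem_nhdsWithin] with r hr
          exact Set.mem_Ioi.mpr (sub_pos.mpr (Set.mem_Ioi.mp hr))
      have hTs : Tendsto (fun h : ℝ => T s (h⁻¹ • (T h y - y))) (𝓝[>] 0)
          (𝓝 (T s x)) := ((T s).continuous.tendsto x).comp hgen
      refine (hTs.comp hmap).congr' ?_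
      filter_upwards [self_mem_nhdsWithin] with r hr
      have hrs : (0:ℝ) < r - s := sub_pos.mpr hr
      have hsplit : T r y = T s (T (r - s) y) := by
        have := hT.map_add s (r - s) hs.1.le hrs.le
        rw [show s + (r - s) = r by ring] at this
        rw [this]; rfl
      show T s ((r - s)⁻¹ • (T (r - s) y - y)) = slope (fun r : ℝ => T r y) s r
      rw [slope_def_module, hsplit, ← map_sub, ← (T s).map_smul_of_tower]
    have hint : IntervalIntegrable (fun s : ℝ => T s x) MeasureTheory.volume 0 t := by
      apply ContinuousOn.intervalIntegrable
      rwa [Set.uIcc_of_le ht.le]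
    have := intervalIntegral.integral_eq_sub_of_hasDeriv_right_of_le ht.le
      hconty hderiv hint
    rw [this]
    simp [hT.map_zero]
  -- the limit
  have hfinal : Tendsto (fun t : ℝ => t⁻¹ • (T t y - y)) atTop (𝓝 0) := by
    have hg : Tendsto (fun t : ℝ => ‖T t y‖ / t + ‖y‖ / t) atTop (𝓝 0) := by
      have h1 := hgrowth y
      have h2 : Tendsto (fun t : ℝ => ‖y‖ / t) atTop (𝓝 0) :=
        tendsto_const_nhds.div_atTop tendsto_id
      simpa using h1.add h2
    apply squeeze_zero_norm' _ hg
    filter_upwards [eventually_gt_atTop (0:ℝ)] with t ht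
    calc ‖t⁻¹ • (T t y - y)‖ = t⁻¹ * ‖T t y - y‖ := by
          rw [norm_smul, Real.norm_eq_abs, abs_of_pos (inv_pos.mpr ht)]
      _ ≤ t⁻¹ * (‖T t y‖ + ‖y‖) := by
          gcongr; exact norm_sub_le _ _
      _ = ‖T t y‖ / t + ‖y‖ / t := by field_simp
  refine hfinal.congr' ?_
  filter_upwards [eventually_gt_atTop (0:ℝ)] with t ht
  rw [cesaro, key t ht]
end

section
/- Let (T(t))_{t≥0} be a C₀-semigroup on a complex Banach space X with infinitesimal generator A such that ‖T(t)v‖/t → 0 as t → ∞ for every v ∈ X. Suppose A has the SVEP, x ∈ D(A), and the local spectra satisfy σ_A(x) ≠ σ_A(Ax). Then T(t) is local mean ergodic at x. -/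
open Filter Topology Metric

/-- `A` (with domain `D`) has the single valued extension property at `μ₀`:
on every open disk centred at `μ₀`, the only analytic `f` with values in `D`
satisfying `(z - A) f z = 0` is `f ≡ 0`. -/
def HasSVEPAt {X : Type*} [NormedAddCommGroup X] [NormedSpace ℂ X]
    (D : Set X) (A : X → X) (μ₀ : ℂ) : Prop :=
  ∀ r : ℝ, 0 < r → ∀ f : ℂ → X, AnalyticOnNhd ℂ f (ball μ₀ r) →
    (∀ z ∈ ball μ₀ r, f z ∈ D ∧ z • f z - A (f z) = 0) →
    ∀ z ∈ ball μ₀ r, f z = 0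

section Helpers
variable {X : Type*} [NormedAddCommGroup X] [NormedSpace ℂ X]
variable {T : ℝ → X →L[ℂ] X} {D : Set X} {A : X → X}

lemma gen_unique (hA : IsGenerator T D A) {x y : X} (hx : x ∈ D)
    (h : Tendsto (fun t : ℝ => t⁻¹ • (T t x - x)) (𝓝[>] 0) (𝓝 y)) : A x = y :=
  tendsto_nhds_unique (hA.tendsto_of_mem x hx) h

lemma gen_sub (hA : IsGenerator T D A) {x y : X} (hx : x ∈ D) (hy : y ∈ D) :
    x - y ∈ D ∧ A (x - y) = A x - A y := by
  have h : Tendsto (fun t : ℝ => t⁻¹ • (T t (x - y) - (x - y))) (𝓝[>] 0) (𝓝 (A x - A y)) := by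
    have := (hA.tendsto_of_mem x hx).sub (hA.tendsto_of_mem y hy)
    refine this.congr fun t => ?_
    rw [← smul_sub]
    congr 1
    rw [map_sub]
    abel
  exact ⟨(hA.mem_domain_iff _).2 ⟨_, h⟩, gen_unique hA ((hA.mem_domain_iff _).2 ⟨_, h⟩) h⟩

lemma gen_smul (hA : IsGenerator T D A) (c : ℂ) {x : X} (hx : x ∈ D) :
    c • x ∈ D ∧ A (c • x) = c • A x := by
  have h : Tendsto (fun t : ℝ => t⁻¹ • (T t (c • x) - c • x)) (𝓝[>] 0) (𝓝 (c • A x)) := by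
    have := (hA.tendsto_of_mem x hx).const_smul c
    refine this.congr fun t => ?_
    rw [map_smul, ← smul_sub, smul_comm]
  exact ⟨(hA.mem_domain_iff _).2 ⟨_, h⟩, gen_unique hA ((hA.mem_domain_iff _).2 ⟨_, h⟩) h⟩

lemma op_bound (hT : IsC0Semigroup T) [CompleteSpace X] (t : ℝ) :
    ∃ M : ℝ, 0 ≤ M ∧ ∀ s ∈ Set.Icc (0:ℝ) t, ‖T s‖ ≤ M := by
  have hpt : ∀ v : X, ∃ C : ℝ, ∀ s : Set.Icc (0:ℝ) t, ‖T s v‖ ≤ C := by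
    intro v
    obtain ⟨C, hC⟩ := isCompact_Icc.exists_bound_of_continuousOn
      ((hT.strong_continuity v).mono (Set.Icc_subset_Ici_self : Set.Icc (0:ℝ) t ⊆ Set.Ici 0))
    exact ⟨C, fun s => hC s s.2⟩
  obtain ⟨C', hC'⟩ := banach_steinhaus (g := fun s : Set.Icc (0:ℝ) t => T s) hpt
  exact ⟨max C' 0, le_max_right _ _, fun s hs => le_max_of_le_left (hC' ⟨s, hs⟩)⟩

lemma ftc [CompleteSpace X] (hT : IsC0Semigroup T) (hA : IsGenerator T D A) {v : X} (hv : v ∈ D)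
    {t : ℝ} (ht : 0 ≤ t) : (∫ s in (0:ℝ)..t, T s (A v)) = T t v - v := by
  have hderiv : ∀ τ ∈ Set.Ioo (0:ℝ) t,
      HasDerivWithinAt (fun s => T s v) (T τ (A v)) (Set.Ioi τ) τ := by
    intro τ hτ
    have h1 : Tendsto (fun ε : ℝ => ε⁻¹ • (T (τ + ε) v - T τ v)) (𝓝[>] 0) (𝓝 (T τ (A v))) := by
      have h2 := ((T τ).continuous.tendsto (A v)).comp (hA.tendsto_of_mem v hv)
      refine h2.congr' ?_
      filter_upwards [self_mem_nhdsWithin] with ε (hε : 0 < ε)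
      show T τ (ε⁻¹ • (T ε v - v)) = ε⁻¹ • (T (τ + ε) v - T τ v)
      rw [(T τ).map_smul_of_tower, map_sub, hT.map_add τ ε hτ.1.le hε.le]
      rfl
    rw [hasDerivWithinAt_iff_tendsto_slope]
    have hmap : Tendsto (fun s : ℝ => s - τ) (𝓝[Set.Ioi τ] τ) (𝓝[>] 0) := by
      rw [tendsto_nhdsWithin_iff]
      constructor
      · have : Tendsto (fun s : ℝ => s - τ) (𝓝 τ) (𝓝 (τ - τ)) :=
          (continuous_id.sub continuous_const).tendsto τ
        rw [sub_self] at this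
        exact this.mono_left nhdsWithin_le_nhds
      · filter_upwards [self_mem_nhdsWithin] with s (hs : τ < s)
        exact sub_pos.2 hs
    have hset : Set.Ioi τ \ {τ} = Set.Ioi τ :=
      Set.diff_singleton_eq_self (by simp)
    rw [hset]
    have := h1.comp hmap
    refine this.congr fun s => ?_
    simp only [Function.comp_apply, slope_def_module]
    rw [add_sub_cancel]
  have hcont : ContinuousOn (fun s => T s v) (Set.Icc 0 t) :=
    (hT.strong_continuity v).mono (Set.Icc_subset_Ici_self)
  have hcont' : ContinuousOn (fun s => T s (A v)) (Set.Icc 0 t) :=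
    (hT.strong_continuity (A v)).mono (Set.Icc_subset_Ici_self)
  have hint : IntervalIntegrable (fun s => T s (A v)) MeasureTheory.volume 0 t := by
    apply ContinuousOn.intervalIntegrable
    rwa [Set.uIcc_of_le ht]
  have := intervalIntegral.integral_eq_sub_of_hasDeriv_right_of_le ht hcont hderiv hint
  rw [this, hT.map_zero]
  rfl


lemma avg_tendsto_s14 (hT : IsC0Semigroup T) [CompleteSpace X] (w : X) :
    Tendsto (fun t : ℝ => t⁻¹ • ∫ s in (0:ℝ)..t, T s w) (𝓝[>] 0) (𝓝 w) := by
  rw [Metric.tendsto_nhdsWithin_nhds]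
  intro ε hε
  have hc : ContinuousWithinAt (fun s : ℝ => T s w) (Set.Ici 0) 0 :=
    hT.strong_continuity w 0 (by simp)
  rw [Metric.continuousWithinAt_iff] at hc
  obtain ⟨δ, hδ0, hδ⟩ := hc (ε / 2) (by positivity)
  refine ⟨δ, hδ0, ?_⟩
  intro t (ht : 0 < t) htδ
  rw [Real.dist_eq, sub_zero, abs_of_pos ht] at htδ
  have hint : IntervalIntegrable (fun s : ℝ => T s w) MeasureTheory.volume 0 t := by
    apply ContinuousOn.intervalIntegrable
    rw [Set.uIcc_of_le ht.le]
    exact (hT.strong_continuity w).mono Set.Icc_subset_Ici_self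
  have key : (∫ s in (0:ℝ)..t, T s w) - t • w = ∫ s in (0:ℝ)..t, (T s w - w) := by
    rw [intervalIntegral.integral_sub hint intervalIntegrable_const,
      intervalIntegral.integral_const, sub_zero]
  have hbound : ‖(∫ s in (0:ℝ)..t, (T s w - w))‖ ≤ ε / 2 * |t - 0| := by
    apply intervalIntegral.norm_integral_le_of_norm_le_const
    intro s hs
    rw [Set.uIoc_of_le ht.le] at hs
    have hs0 : s ∈ Set.Ici (0:ℝ) := le_of_lt hs.1
    have hsd : dist s 0 < δ := by
      rw [Real.dist_eq, sub_zero, abs_of_pos hs.1]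
      exact lt_of_le_of_lt hs.2 htδ
    have := hδ hs0 hsd
    rw [dist_eq_norm] at this
    simpa [hT.map_zero] using this.le
  rw [dist_eq_norm]
  have heq : t⁻¹ • (∫ s in (0:ℝ)..t, T s w) - w
      = t⁻¹ • ((∫ s in (0:ℝ)..t, T s w) - t • w) := by
    rw [smul_sub, smul_smul, inv_mul_cancel₀ ht.ne', one_smul]
  rw [heq, key, norm_smul, norm_inv, Real.norm_eq_abs, abs_of_pos ht]
  calc t⁻¹ * ‖(∫ s in (0:ℝ)..t, (T s w - w))‖ ≤ t⁻¹ * (ε / 2 * |t - 0|) := by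
        exact mul_le_mul_of_nonneg_left hbound (by positivity)
    _ = ε / 2 := by rw [sub_zero, abs_of_pos ht]; field_simp
    _ < ε := by linarith

lemma gen_closed (hT : IsC0Semigroup T) (hA : IsGenerator T D A) [CompleteSpace X]
    {ι : Type} {l : Filter ι} [l.NeBot] {u : ι → X} {v w : X}
    (hmem : ∀ᶠ i in l, u i ∈ D) (hu : Tendsto u l (𝓝 v))
    (hAu : Tendsto (fun i => A (u i)) l (𝓝 w)) : v ∈ D ∧ A v = w := by
  have key : ∀ t : ℝ, 0 ≤ t → T t v - v = ∫ s in (0:ℝ)..t, T s w := by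
    intro t ht
    obtain ⟨M, hM0, hM⟩ := op_bound hT t
    have hinti : ∀ z : X, IntervalIntegrable (fun s : ℝ => T s z) MeasureTheory.volume 0 t := by
      intro z
      apply ContinuousOn.intervalIntegrable
      rw [Set.uIcc_of_le ht]
      exact (hT.strong_continuity z).mono Set.Icc_subset_Ici_self
    have hnorm : Tendsto (fun i => ‖A (u i) - w‖) l (𝓝 0) := by
      have := (hAu.sub (tendsto_const_nhds (x := w))).norm
      rwa [sub_self, norm_zero] at this
    have hdiff0 : Tendsto (fun i => (∫ s in (0:ℝ)..t, T s (A (u i))) - ∫ s in (0:ℝ)..t, T s w)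
        l (𝓝 0) := by
      refine squeeze_zero_norm (a := fun i => M * ‖A (u i) - w‖ * |t - 0|) ?_ ?_
      · intro i
        rw [← intervalIntegral.integral_sub (hinti _) (hinti _)]
        apply intervalIntegral.norm_integral_le_of_norm_le_const
        intro s hs
        rw [Set.uIoc_of_le ht] at hs
        calc ‖T s (A (u i)) - T s w‖ = ‖T s (A (u i) - w)‖ := by rw [map_sub]
          _ ≤ ‖T s‖ * ‖A (u i) - w‖ := (T s).le_opNorm _
          _ ≤ M * ‖A (u i) - w‖ :=
            mul_le_mul_of_nonneg_right (hM s ⟨hs.1.le, hs.2⟩) (norm_nonneg _)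
      · have : Tendsto (fun i => M * ‖A (u i) - w‖ * |t - 0|) l (𝓝 (M * 0 * |t - 0|)) :=
          ((hnorm.const_mul M).mul_const _)
        simpa using this
    have hR : Tendsto (fun i => ∫ s in (0:ℝ)..t, T s (A (u i))) l
        (𝓝 (∫ s in (0:ℝ)..t, T s w)) := by
      have := hdiff0.add (tendsto_const_nhds (x := ∫ s in (0:ℝ)..t, T s w))
      simpa using this
    have hL : Tendsto (fun i => T t (u i) - u i) l (𝓝 (T t v - v)) :=
      (((T t).continuous.tendsto v).comp hu).sub hu
    refine tendsto_nhds_unique hL (hR.congr' ?_)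
    filter_upwards [hmem] with i hi
    exact ftc hT hA hi ht
  have hlim : Tendsto (fun t : ℝ => t⁻¹ • (T t v - v)) (𝓝[>] 0) (𝓝 w) := by
    refine (avg_tendsto_s14 hT w).congr' ?_
    filter_upwards [self_mem_nhdsWithin] with t (ht : 0 < t)
    rw [key t ht.le]
  exact ⟨(hA.mem_domain_iff v).2 ⟨w, hlim⟩, gen_unique hA ((hA.mem_domain_iff v).2 ⟨w, hlim⟩) hlim⟩


lemma gen_add (hA : IsGenerator T D A) {x y : X} (hx : x ∈ D) (hy : y ∈ D) :
    x + y ∈ D ∧ A (x + y) = A x + A y := by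
  have h : Tendsto (fun t : ℝ => t⁻¹ • (T t (x + y) - (x + y))) (𝓝[>] 0) (𝓝 (A x + A y)) := by
    have := (hA.tendsto_of_mem x hx).add (hA.tendsto_of_mem y hy)
    refine this.congr fun t => ?_
    rw [← smul_add]
    congr 1
    rw [map_add]
    abel
  exact ⟨(hA.mem_domain_iff _).2 ⟨_, h⟩, gen_unique hA ((hA.mem_domain_iff _).2 ⟨_, h⟩) h⟩

lemma T_const_of_ker [CompleteSpace X] (hT : IsC0Semigroup T) (hA : IsGenerator T D A)
    {u : X} (hu : u ∈ D) (hAu : A u = 0) {s : ℝ} (hs : 0 ≤ s) : T s u = u := by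
  have h := ftc hT hA hu hs
  rw [hAu] at h
  simp only [map_zero, intervalIntegral.integral_zero] at h
  exact (sub_eq_zero.mp h.symm)

end Helpers

section Spec
variable {X : Type*} [NormedAddCommGroup X] [NormedSpace ℂ X]
variable {T : ℝ → X →L[ℂ] X} {D : Set X} {A : X → X}

lemma res_subset (hA : IsGenerator T D A) {x : X} (hxD : x ∈ D) :
    localResolventSet D A x ⊆ localResolventSet D A (A x) := by
  rintro μ ⟨U, hU, hμU, f, hf, hfU⟩
  refine ⟨U, hU, hμU, fun z => x + z • f z, ?_, ?_⟩
  · intro z hz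
    exact analyticAt_const.add (analyticAt_id.smul (hf z hz))
  · intro z hz
    obtain ⟨hfD, hfe⟩ := hfU z hz
    have hAf : A (f z) = x + z • f z := by rw [← hfe]; abel
    have hz1 := gen_smul hA z hfD
    have hz2 := gen_add hA hxD hz1.1
    refine ⟨hz2.1, ?_⟩
    rw [hz2.2, hz1.2, hAf]
    rw [smul_add]
    abel

lemma res_subset' (hA : IsGenerator T D A) {x : X} (hxD : x ∈ D) {μ : ℂ} (hμ : μ ≠ 0)
    (h : μ ∈ localResolventSet D A (A x)) : μ ∈ localResolventSet D A x := by
  obtain ⟨U, hU, hμU, f, hf, hfU⟩ := h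
  refine ⟨U \ {0}, hU.sdiff isClosed_singleton, ⟨hμU, hμ⟩, fun z => z⁻¹ • (f z - x), ?_, ?_⟩
  · intro z hz
    exact ((analyticAt_id.inv hz.2).smul ((hf z hz.1).sub analyticAt_const))
  · intro z hz
    have hz0 : z ≠ 0 := hz.2
    obtain ⟨hfD, hfe⟩ := hfU z hz.1
    have h1 := gen_sub hA hfD hxD
    have h2 := gen_smul hA z⁻¹ h1.1
    refine ⟨h2.1, ?_⟩
    have hAfx : A (f z) - A x = z • f z := by rw [← hfe]; abel
    rw [h2.2, h1.2, hAfx, smul_smul, smul_smul, inv_mul_cancel₀ hz0, one_smul,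
      mul_inv_cancel₀ hz0, one_smul]
    abel

end Spec

/-- If `‖T(t)v‖/t → 0` for every `v`, `A` has the SVEP, `x ∈ D(A)` and
`σ_A(x) ≠ σ_A(Ax)`, then `T(t)` is local mean ergodic at `x`. -/
theorem localMeanErgodic_of_localSpectrum_ne
    {X : Type*} [NormedAddCommGroup X] [NormedSpace ℂ X] [CompleteSpace X]
    (T : ℝ → X →L[ℂ] X) (D : Set X) (A : X → X)
    (hT : IsC0Semigroup T) (hA : IsGenerator T D A)
    (hgrowth : ∀ v : X, Tendsto (fun t : ℝ => ‖T t v‖ / t) atTop (𝓝 0))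
    (hSVEP : ∀ μ : ℂ, HasSVEPAt D A μ) (x : X) (hxD : x ∈ D)
    (hne : localSpectrum D A x ≠ localSpectrum D A (A x)) :
    ∃ y : X, Tendsto (fun t : ℝ => cesaro T t x) atTop (𝓝 y) := by
  -- Step 1 : 0 is in the local resolvent set of A x
  have h0 : (0 : ℂ) ∈ localResolventSet D A (A x) := by
    by_contra h0
    apply hne
    unfold localSpectrum
    congr 1
    apply Set.Subset.antisymm (res_subset hA hxD)
    intro μ hμ
    rcases eq_or_ne μ 0 with rfl | hμ0
    · exact absurd hμ h0
    · exact res_subset' hA hxD hμ0 hμ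
  -- Step 2 : analytic local resolvent near 0
  obtain ⟨U, hU, h0U, f, hf, hfU⟩ := h0
  have hA0 : A (f 0) = A x := by
    have := (hfU 0 h0U).2
    rwa [zero_smul, sub_zero] at this
  have hf0D : f 0 ∈ D := (hfU 0 h0U).1
  -- Step 3 : f 0 is in the range of A
  have hder : HasDerivAt f (deriv f 0) 0 := (hf 0 h0U).differentiableAt.hasDerivAt
  have hslope : Tendsto (fun z : ℂ => z⁻¹ • (f z - f 0)) (𝓝[≠] 0) (𝓝 (deriv f 0)) := by
    have := hasDerivAt_iff_tendsto_slope.mp hder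
    refine this.congr fun z => ?_
    rw [slope_def_module, sub_zero]
  have hUmem : ∀ᶠ z : ℂ in 𝓝[≠] 0, z ∈ U ∧ z ≠ (0:ℂ) := by
    filter_upwards [self_mem_nhdsWithin,
      mem_nhdsWithin_of_mem_nhds (hU.mem_nhds h0U)] with z h1 h2
    exact ⟨h2, h1⟩
  have hg : ∀ z : ℂ, z ∈ U → z ≠ 0 →
      (z⁻¹ • (f z - f 0) ∈ D ∧ A (z⁻¹ • (f z - f 0)) = f z) := by
    intro z hzU hz0
    obtain ⟨hfD, hfe⟩ := hfU z hzU
    have h1 := gen_sub hA hfD hf0D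
    have h2 := gen_smul hA z⁻¹ h1.1
    have hAfz : A (f z) - A (f 0) = z • f z := by rw [hA0, ← hfe]; abel
    refine ⟨h2.1, ?_⟩
    rw [h2.2, h1.2, hAfz, smul_smul, inv_mul_cancel₀ hz0, one_smul]
  have hclosed := gen_closed hT hA (l := 𝓝[≠] (0:ℂ))
    (u := fun z : ℂ => z⁻¹ • (f z - f 0)) (v := deriv f 0) (w := f 0)
    (by filter_upwards [hUmem] with z hz; exact (hg z hz.1 hz.2).1)
    hslope
    (by
      have hcf : Tendsto f (𝓝[≠] (0:ℂ)) (𝓝 (f 0)) :=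
        ((hf 0 h0U).continuousAt.tendsto).mono_left nhdsWithin_le_nhds
      refine hcf.congr' ?_
      filter_upwards [hUmem] with z hz
      exact ((hg z hz.1 hz.2).2).symm)
  set a₁ := deriv f 0 with ha₁
  obtain ⟨ha₁D, ha₁A⟩ := hclosed
  -- Step 4 : decompose x
  set u₀ := x - f 0 with hu₀
  obtain ⟨hu₀D, hu₀A⟩ := gen_sub hA hxD hf0D
  have hu₀ker : A u₀ = 0 := by rw [hu₀A, hA0, sub_self]
  refine ⟨u₀, ?_⟩
  have hsplit : ∀ t : ℝ, 0 < t → cesaro T t x = u₀ + t⁻¹ • (T t a₁ - a₁) := by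
    intro t ht
    have hint : ∀ z : X, IntervalIntegrable (fun s : ℝ => T s z) MeasureTheory.volume 0 t := by
      intro z
      apply ContinuousOn.intervalIntegrable
      rw [Set.uIcc_of_le ht.le]
      exact (hT.strong_continuity z).mono Set.Icc_subset_Ici_self
    have hxdec : x = u₀ + f 0 := by rw [hu₀]; abel
    have h1 : (∫ s in (0:ℝ)..t, T s x)
        = (∫ s in (0:ℝ)..t, T s u₀) + ∫ s in (0:ℝ)..t, T s (f 0) := by
      rw [← intervalIntegral.integral_add (hint u₀) (hint (f 0))]
      apply intervalIntegral.integral_congr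
      intro s hs
      show T s x = T s u₀ + T s (f 0)
      rw [hxdec, map_add]
    have h2 : (∫ s in (0:ℝ)..t, T s u₀) = t • u₀ := by
      rw [show (∫ s in (0:ℝ)..t, T s u₀) = ∫ s in (0:ℝ)..t, u₀ from ?_,
        intervalIntegral.integral_const, sub_zero]
      apply intervalIntegral.integral_congr
      intro s hs
      rw [Set.uIcc_of_le ht.le] at hs
      exact T_const_of_ker hT hA hu₀D hu₀ker hs.1
    have h3 : (∫ s in (0:ℝ)..t, T s (f 0)) = T t a₁ - a₁ := by
      rw [show (∫ s in (0:ℝ)..t, T s (f 0)) = ∫ s in (0:ℝ)..t, T s (A a₁) from ?_]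
      · exact ftc hT hA ha₁D ht.le
      · rw [ha₁A]
    rw [cesaro, h1, h2, h3, smul_add, smul_smul, inv_mul_cancel₀ ht.ne', one_smul]
  have hz : Tendsto (fun t : ℝ => t⁻¹ • (T t a₁ - a₁)) atTop (𝓝 0) := by
    apply squeeze_zero_norm' (a := fun t : ℝ => ‖T t a₁‖ / t + ‖a₁‖ / t)
    · filter_upwards [eventually_gt_atTop (0:ℝ)] with t ht
      rw [norm_smul, norm_inv, Real.norm_eq_abs, abs_of_pos ht]
      calc t⁻¹ * ‖T t a₁ - a₁‖ ≤ t⁻¹ * (‖T t a₁‖ + ‖a₁‖) :=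
            mul_le_mul_of_nonneg_left (norm_sub_le _ _) (by positivity)
        _ = ‖T t a₁‖ / t + ‖a₁‖ / t := by field_simp
    · have h4 : Tendsto (fun t : ℝ => ‖a₁‖ / t) atTop (𝓝 0) :=
        Tendsto.div_atTop tendsto_const_nhds tendsto_id
      have := (hgrowth a₁).add h4
      simpa using this
  have : Tendsto (fun t : ℝ => u₀ + t⁻¹ • (T t a₁ - a₁)) atTop (𝓝 (u₀ + 0)) :=
    tendsto_const_nhds.add hz
  rw [add_zero] at this
  refine this.congr' ?_
  filter_upwards [eventually_gt_atTop (0:ℝ)] with t ht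
  exact (hsplit t ht).symm
end
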